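/- Let G = PSL(2,32) ⋊ C₅ where C₅ acts by field automorphisms, and let π = {2,3,11,31}. Then O_π(G) = PSL(2,32), and G has at least 5 irreducible characters χ with χ(1) coprime to every prime in π. -/

import Mathlib

open scoped Classical

/-- A natural number is a `π`-number if all of its prime divisors lie in `π`. -/
def Nat.IsPiNumber (π : Set ℕ) (n : ℕ) : Prop := ∀ p : ℕ, p.Prime → p ∣ n → p ∈ π

/-- The `π`-part of a natural number: the largest divisor all of whose prime factors lie in `π`. -/
noncomputable def Nat.piPart (π : Set ℕ) (n : ℕ) : ℕ :=
  n.factorization.prod fun p k => if p ∈ π then p ^ k else 1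

/-- `O_π(G)`: the subgroup generated by all normal `π`-subgroups of `G`
(for finite `G` this is the largest normal `π`-subgroup). -/
def Opi (π : Set ℕ) (G : Type*) [Group G] : Subgroup G :=
  Subgroup.normalClosure
    (⋃ N ∈ {N : Subgroup G | N.Normal ∧ Nat.IsPiNumber π (Nat.card N)}, (N : Set G))

instance Opi.normal (π : Set ℕ) (G : Type*) [Group G] : (Opi π G).Normal :=
  Subgroup.normalClosure_normal

/-- `O_{ππ'}(G)`: the preimage in `G` of `O_{π'}(G / O_π(G))`. -/
def Opipi' (π : Set ℕ) (G : Type*) [Group G] : Subgroup G :=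
  (Opi πᶜ (G ⧸ Opi π G)).comap (QuotientGroup.mk' (Opi π G))

/-- A group is `π`-separable if it has a normal series each of whose factors is a
`π`-group or a `π'`-group. -/
def IsPiSeparable (π : Set ℕ) (G : Type*) [Group G] : Prop :=
  ∃ (n : ℕ) (H : Fin (n + 1) → Subgroup G), Monotone H ∧ H 0 = ⊥ ∧ H (Fin.last n) = ⊤ ∧
    (∀ i, (H i).Normal) ∧
    ∀ i : Fin n, Nat.IsPiNumber π ((H i.castSucc).relIndex (H i.succ)) ∨
      Nat.IsPiNumber πᶜ ((H i.castSucc).relIndex (H i.succ))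

open Matrix

/-! ### Auxiliary material -/

section OneDim

open CategoryTheory

/-- The one-dimensional representation associated to a multiplicative character. -/
noncomputable def oneDimRep {G : Type} [Group G] (f : G →* ℂ) : Representation ℂ G ℂ :=
  (algebraMap ℂ (Module.End ℂ ℂ)).toMonoidHom.comp f

/-- The one-dimensional `FDRep` associated to a multiplicative character. -/
noncomputable def oneDimFDRep {G : Type} [Group G] (f : G →* ℂ) : FDRep ℂ G :=
  FDRep.of (oneDimRep f)

theorem oneDim_finrank {G : Type} [Group G] (f : G →* ℂ) :
    Module.finrank ℂ (oneDimFDRep f) = 1 := Module.finrank_self ℂ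

theorem oneDim_char {G : Type} [Group G] (f : G →* ℂ) (g : G) :
    FDRep.character (oneDimFDRep f) g = f g := by
  show LinearMap.trace ℂ ℂ ((oneDimRep f) g) = f g
  show LinearMap.trace ℂ ℂ (algebraMap ℂ (Module.End ℂ ℂ) (f g)) = f g
  rw [Module.algebraMap_end_eq_smul_id, _root_.map_smul, LinearMap.trace_id]
  simp

theorem oneDim_simple {G : Type} [Group G] (V : FDRep ℂ G) (hV : Module.finrank ℂ V = 1) :
    Simple V := by
  haveI : Nontrivial V := Module.nontrivial_of_finrank_pos (R := ℂ) (by omega)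
  constructor
  intro Y f hm
  constructor
  · rintro hiso rfl
    have h1 : CategoryTheory.inv (0 : Y ⟶ V) ≫ (0 : Y ⟶ V) = 𝟙 V := IsIso.inv_hom_id _
    obtain ⟨x, hx⟩ := exists_ne (0 : V)
    apply hx
    have := congrArg Action.Hom.hom h1
    have hx' := LinearMap.congr_fun (congrArg (fun φ => φ.hom.hom) this) x
    simpa using hx'.symm
  · intro hf
    set F : Y →ₗ[ℂ] V := f.hom.hom.hom with hFdef
    have hF : F ≠ 0 := fun h => hf (Action.Hom.ext (FGModuleCat.hom_ext h))
    obtain ⟨y₀, hy₀⟩ : ∃ y, F y ≠ 0 := by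
      by_contra h
      push_neg at h
      exact hF (LinearMap.ext h)
    have hspan : Submodule.span ℂ {F y₀} = ⊤ := (finrank_eq_one_iff_of_nonzero (F y₀) hy₀).mp hV
    have hrange : LinearMap.range F = ⊤ := by
      rw [eq_top_iff, ← hspan, Submodule.span_le]
      rintro v rfl
      exact ⟨y₀, rfl⟩
    have hK : ∀ (g : G), ∀ y ∈ LinearMap.ker F, Y.ρ g y ∈ LinearMap.ker F := by
      intro g y hy
      simp only [LinearMap.mem_ker] at hy ⊢
      have hc : F (Y.ρ g y) = V.ρ g (F y) := LinearMap.congr_fun (congrArg (fun φ => φ.hom.hom) (f.comm g)) y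
      rw [hc, hy, map_zero]
    let ρK : Representation ℂ G (LinearMap.ker F) :=
      { toFun := fun g => (Y.ρ g).restrict (hK g)
        map_one' := LinearMap.ext fun y => Subtype.ext <| by
          rw [LinearMap.restrict_apply]
          show (Y.ρ 1) y.1 = y.1
          rw [_root_.map_one, Module.End.one_apply]
        map_mul' := fun g h => LinearMap.ext fun y => Subtype.ext <| by
          rw [LinearMap.restrict_apply]
          show (Y.ρ (g * h)) y.1 = ((Y.ρ g).restrict (hK g) (((Y.ρ h).restrict (hK h)) y)).1
          rw [LinearMap.restrict_apply, LinearMap.restrict_apply]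
          show (Y.ρ (g * h)) y.1 = (Y.ρ g) ((Y.ρ h) y.1)
          rw [_root_.map_mul, Module.End.mul_apply] }
    let i : FDRep.of ρK ⟶ Y := ⟨FGModuleCat.ofHom (Submodule.subtype _), fun g => rfl⟩
    have hi : i ≫ f = 0 := by
      apply Action.Hom.ext
      ext y
      exact y.2
    have hinj : Function.Injective F := by
      rw [← LinearMap.ker_eq_bot, Submodule.eq_bot_iff]
      intro y hy
      have h0 : i = 0 := (cancel_mono f).mp (by simp [hi])
      have := congrArg Action.Hom.hom h0
      exact LinearMap.congr_fun (congrArg (fun φ => φ.hom.hom) this) ⟨y, hy⟩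
    let e : Y ≃ₗ[ℂ] V := LinearEquiv.ofBijective F ⟨hinj, LinearMap.range_eq_top.mp hrange⟩
    have hcomm : ∀ (g : G) (v : V), e.symm (V.ρ g v) = Y.ρ g (e.symm v) := by
      intro g v
      apply hinj
      show F (e.symm (V.ρ g v)) = F (Y.ρ g (e.symm v))
      have h1 : F (e.symm (V.ρ g v)) = V.ρ g v := e.apply_symm_apply _
      have h2 : F (Y.ρ g (e.symm v)) = V.ρ g (F (e.symm v)) := LinearMap.congr_fun (congrArg (fun φ => φ.hom.hom) (f.comm g)) _
      rw [h1, h2]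
      congr 1
      exact (e.apply_symm_apply v).symm
    refine ⟨⟨⟨FGModuleCat.ofHom e.symm.toLinearMap, fun g => FGModuleCat.hom_ext (LinearMap.ext fun v => hcomm g v)⟩, ?_, ?_⟩⟩
    · apply Action.Hom.ext
      refine FGModuleCat.hom_ext (LinearMap.ext fun y => ?_)
      exact e.symm_apply_apply y
    · apply Action.Hom.ext
      refine FGModuleCat.hom_ext (LinearMap.ext fun v => ?_)
      exact e.apply_symm_apply v

end OneDim

section Card

noncomputable local instance : Fintype (GaloisField 2 5) := Fintype.ofFinite _

theorem cardGF : Fintype.card (GaloisField 2 5) = 32 := by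
  have := GaloisField.card 2 5 (by norm_num)
  simpa using this

theorem cardGL32 : Nat.card (GL (Fin 2) (GaloisField 2 5)) = 1014816 := by
  rw [Matrix.card_GL_field, cardGF]
  decide

theorem det_surj32 :
    Function.Surjective
      (Matrix.GeneralLinearGroup.det : GL (Fin 2) (GaloisField 2 5) →* (GaloisField 2 5)ˣ) := by
  intro u
  have h1 : (fun i => ![((u : GaloisField 2 5)), 1] i * ![(((u⁻¹ : _ˣ)) : GaloisField 2 5), 1] i) =
      (1 : Fin 2 → GaloisField 2 5) := by
    funext i; fin_cases i <;> simp
  have h2 : (fun i => ![(((u⁻¹ : _ˣ)) : GaloisField 2 5), 1] i * ![((u : GaloisField 2 5)), 1] i) =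
      (1 : Fin 2 → GaloisField 2 5) := by
    funext i; fin_cases i <;> simp
  refine ⟨⟨Matrix.diagonal ![(u : GaloisField 2 5), 1],
      Matrix.diagonal ![((u⁻¹ : _ˣ) : GaloisField 2 5), 1], ?_, ?_⟩, ?_⟩
  · rw [Matrix.diagonal_mul_diagonal, h1]; exact Matrix.diagonal_one
  · rw [Matrix.diagonal_mul_diagonal, h2]; exact Matrix.diagonal_one
  · apply Units.ext
    rw [Matrix.GeneralLinearGroup.val_det_apply]
    simp [Matrix.det_diagonal, Fin.prod_univ_two]

theorem cardSL32 : Nat.card (Matrix.SpecialLinearGroup (Fin 2) (GaloisField 2 5)) = 32736 := by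
  set D := (Matrix.GeneralLinearGroup.det :
    GL (Fin 2) (GaloisField 2 5) →* (GaloisField 2 5)ˣ) with hD
  have e : Matrix.SpecialLinearGroup (Fin 2) (GaloisField 2 5) ≃ D.ker :=
    { toFun := fun g => ⟨Matrix.SpecialLinearGroup.toGL g, by
        rw [MonoidHom.mem_ker]; exact Matrix.SpecialLinearGroup.coeToGL_det g⟩
      invFun := fun M => ⟨(M.1 : GL (Fin 2) (GaloisField 2 5)).val, by
        have h := M.2
        rw [MonoidHom.mem_ker] at h
        have := congrArg Units.val h
        rwa [Matrix.GeneralLinearGroup.val_det_apply] at this⟩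
      left_inv := fun g => Subtype.ext rfl
      right_inv := fun M => Subtype.ext (Units.ext rfl) }
  rw [Nat.card_congr e]
  have h1 : Nat.card (GL (Fin 2) (GaloisField 2 5)) =
      Nat.card (GL (Fin 2) (GaloisField 2 5) ⧸ D.ker) * Nat.card D.ker :=
    Subgroup.card_eq_card_quotient_mul_card_subgroup D.ker
  have h2 : Nat.card (GL (Fin 2) (GaloisField 2 5) ⧸ D.ker) = Nat.card (GaloisField 2 5)ˣ :=
    Nat.card_congr (QuotientGroup.quotientKerEquivOfSurjective D det_surj32).toEquiv
  have h3 : Nat.card (GaloisField 2 5)ˣ = 31 := by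
    rw [Nat.card_units, Nat.card_eq_fintype_card, cardGF]
  rw [cardGL32, h2, h3] at h1
  omega

instance : Subsingleton (rootsOfUnity 2 (GaloisField 2 5)) := by
  constructor
  rintro ⟨u, hu⟩ ⟨v, hv⟩
  have key : ∀ w : (GaloisField 2 5)ˣ, w ∈ rootsOfUnity 2 (GaloisField 2 5) → w = 1 := by
    intro w hw
    rw [mem_rootsOfUnity] at hw
    have hw' : (w : GaloisField 2 5) ^ 2 = 1 := by
      have := congrArg Units.val hw
      push_cast at this
      simpa using this
    have h2 : ((w : GaloisField 2 5) + 1) ^ 2 = 0 := by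
      rw [CharTwo.add_sq, hw', one_pow, CharTwo.add_self_eq_zero]
    have h3 : (w : GaloisField 2 5) + 1 = 0 := pow_eq_zero_iff (by norm_num) |>.mp h2
    have h4 : (w : GaloisField 2 5) = 1 := by
      have : (w : GaloisField 2 5) = -1 := by linear_combination h3
      rwa [CharTwo.neg_eq] at this
    exact Units.ext h4
  simp only [Subtype.mk.injEq]
  rw [key u hu, key v hv]

theorem cardPSL32 :
    Nat.card (Matrix.ProjectiveSpecialLinearGroup (Fin 2) (GaloisField 2 5)) = 32736 := by
  have hc : Nat.card
      (Subgroup.center (Matrix.SpecialLinearGroup (Fin 2) (GaloisField 2 5))) = 1 := by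
    rw [Nat.card_congr (Matrix.SpecialLinearGroup.center_equiv_rootsOfUnity
      (n := Fin 2) (R := GaloisField 2 5)).toEquiv]
    have h : (max (Fintype.card (Fin 2)) 1) = 2 := by simp
    rw [h]
    exact Nat.card_of_subsingleton 1
  have h1 := Subgroup.card_eq_card_quotient_mul_card_subgroup
    (Subgroup.center (Matrix.SpecialLinearGroup (Fin 2) (GaloisField 2 5)))
  rw [cardSL32, hc, mul_one] at h1
  exact h1.symm

theorem mem_piset (p : ℕ) (hp : p.Prime) (hd : p ∣ 32736) : p ∈ ({2, 3, 11, 31} : Set ℕ) := by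
  have h : p ∣ 2 ^ 5 * (3 * (11 * 31)) := by
    have h32 : (2:ℕ) ^ 5 * (3 * (11 * 31)) = 32736 := by norm_num
    rw [h32]
    exact hd
  simp only [Set.mem_insert_iff, Set.mem_singleton_iff]
  rcases hp.dvd_mul.mp h with h | h
  · exact Or.inl ((Nat.prime_dvd_prime_iff_eq hp Nat.prime_two).mp (hp.dvd_of_dvd_pow h))
  rcases hp.dvd_mul.mp h with h | h
  · exact Or.inr (Or.inl ((Nat.prime_dvd_prime_iff_eq hp Nat.prime_three).mp h))
  rcases hp.dvd_mul.mp h with h | h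
  · exact Or.inr (Or.inr (Or.inl ((Nat.prime_dvd_prime_iff_eq hp (by norm_num)).mp h)))
  · exact Or.inr (Or.inr (Or.inr ((Nat.prime_dvd_prime_iff_eq hp (by norm_num)).mp h)))

end Card

/-- Let `G = PSL(2,32) ⋊ C₅` where `C₅` acts by field automorphisms, and
`π = {2,3,11,31}`. Then `O_π(G) = PSL(2,32)` and `G` has at least `5` distinct
irreducible (complex) characters whose degree is coprime to every prime in `π`. -/
theorem stmt_18 (π : Set ℕ) (hπ : π = {2, 3, 11, 31})
    (φ : Multiplicative (ZMod 5) →* MulAut (ProjectiveSpecialLinearGroup (Fin 2) (GaloisField 2 5)))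
    (hinj : Function.Injective φ)
    (hfield : ∀ a : Multiplicative (ZMod 5),
      ∃ e : GaloisField 2 5 ≃+* GaloisField 2 5,
        ∀ g : SpecialLinearGroup (Fin 2) (GaloisField 2 5),
          φ a (QuotientGroup.mk g) =
            QuotientGroup.mk (SpecialLinearGroup.map (n := Fin 2) e.toRingHom g)) :
    Opi π (ProjectiveSpecialLinearGroup (Fin 2) (GaloisField 2 5) ⋊[φ] Multiplicative (ZMod 5)) =
      (SemidirectProduct.inl (φ := φ)).range ∧
    ∃ V : Fin 5 →
        FDRep ℂ (ProjectiveSpecialLinearGroup (Fin 2) (GaloisField 2 5) ⋊[φ] Multiplicative (ZMod 5)),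
      (∀ i, CategoryTheory.Simple (V i)) ∧
      (∀ i j, i ≠ j → FDRep.character (V i) ≠ FDRep.character (V j)) ∧
      ∀ i, ∀ p ∈ π, Nat.Coprime p (Module.finrank ℂ (V i)) := by
  constructor
  · -- `O_π(G) = PSL(2,32)`
    haveI hnor : ((SemidirectProduct.inl (φ := φ)).range).Normal :=
      SemidirectProduct.range_inl_eq_ker_rightHom (φ := φ) ▸ MonoidHom.normal_ker _
    apply le_antisymm
    · apply Subgroup.normalClosure_le_normal
      intro x hx
      simp only [Set.mem_iUnion, SetLike.mem_coe, exists_prop] at hx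
      obtain ⟨N, ⟨hNnorm, hNpi⟩, hxN⟩ := hx
      rw [SemidirectProduct.range_inl_eq_ker_rightHom, SetLike.mem_coe, MonoidHom.mem_ker]
      by_contra hne
      have hdvd5 : orderOf (SemidirectProduct.rightHom x) ∣ 5 := by
        have h := orderOf_dvd_natCard (SemidirectProduct.rightHom x)
        rwa [Nat.card_eq_fintype_card, Fintype.card_multiplicative, ZMod.card] at h
      have h5 : orderOf (SemidirectProduct.rightHom x) = 5 := by
        rcases (by norm_num : Nat.Prime 5).eq_one_or_self_of_dvd _ hdvd5 with h | h
        · exact absurd (orderOf_eq_one_iff.mp h) hne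
        · exact h
      have hdvd : (5 : ℕ) ∣ Nat.card N := by
        have h1 : orderOf (SemidirectProduct.rightHom x) ∣ orderOf x :=
          orderOf_map_dvd _ x
        have h2 : orderOf x ∣ Nat.card N := by
          have h3 : orderOf (⟨x, hxN⟩ : N) ∣ Nat.card N := orderOf_dvd_natCard _
          rwa [Subgroup.orderOf_mk] at h3
        have := h1.trans h2
        rwa [h5] at this
      have h5π : (5 : ℕ) ∈ π := hNpi 5 (by norm_num) hdvd
      rw [hπ] at h5π
      simp only [Set.mem_insert_iff, Set.mem_singleton_iff] at h5π
      norm_num at h5π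
    · intro x hx
      apply Subgroup.subset_normalClosure
      refine Set.mem_biUnion ?_ hx
      refine ⟨hnor, ?_⟩
      intro p hp hdp
      have hcard : Nat.card (SemidirectProduct.inl (φ := φ)).range = 32736 := by
        rw [← Nat.card_congr (MonoidHom.ofInjective
          (SemidirectProduct.inl_injective (φ := φ))).toEquiv]
        exact cardPSL32
      rw [hcard] at hdp
      rw [hπ]
      exact mem_piset p hp hdp
  · -- the five linear characters
    set G := ProjectiveSpecialLinearGroup (Fin 2) (GaloisField 2 5) ⋊[φ] Multiplicative (ZMod 5)
      with hG
    have h5 : (0:ℝ) < 5 := by norm_num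
    set ζ : ℂ := Complex.exp (2 * Real.pi * Complex.I / 5) with hζdef
    have hζ : IsPrimitiveRoot ζ 5 := Complex.isPrimitiveRoot_exp 5 (by norm_num)
    have hpow : ∀ i : Fin 5, (ζ ^ (i : ℕ)) ^ 5 = 1 := by
      intro i
      rw [← pow_mul, mul_comm, pow_mul, hζ.pow_eq_one, one_pow]
    let f : Fin 5 → (G →* ℂ) := fun i =>
      (AddChar.zmodChar 5 (hpow i)).toMonoidHom.comp SemidirectProduct.rightHom
    refine ⟨fun i => oneDimFDRep (f i), fun i => oneDim_simple _ (oneDim_finrank _), ?_, ?_⟩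
    · intro i j hij h
      apply hij
      have hval := congrFun h (SemidirectProduct.inr (Multiplicative.ofAdd (1 : ZMod 5)))
      rw [oneDim_char, oneDim_char] at hval
      have hfi : ∀ i : Fin 5, f i (SemidirectProduct.inr (Multiplicative.ofAdd (1 : ZMod 5)))
          = ζ ^ (i : ℕ) := by
        intro i
        show (AddChar.zmodChar 5 (hpow i)).toMonoidHom
          (SemidirectProduct.rightHom (SemidirectProduct.inr (Multiplicative.ofAdd (1 : ZMod 5))))
          = ζ ^ (i : ℕ)
        rw [SemidirectProduct.rightHom_inr]
        show AddChar.zmodChar 5 (hpow i) (1 : ZMod 5) = ζ ^ (i : ℕ)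
        haveI : Fact (1 < 5) := ⟨by norm_num⟩
        rw [AddChar.zmodChar_apply, ZMod.val_one, pow_one]
      rw [hfi i, hfi j] at hval
      exact Fin.val_injective (hζ.pow_inj i.isLt j.isLt hval)
    · intro i p hp
      rw [oneDim_finrank]
      exact Nat.coprime_one_right p
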